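/- Let b ≥ 2 be an integer, j₁, j₂ ∈ ℕ₀ = {0,1,2,…}, m₁ ∈ {0,…,b^{j₁}−1}, m₂ ∈ {0,…,b^{j₂}−1}, ℓ₁, ℓ₂ ∈ {1,…,b−1}, and let z = (z₁,z₂) ∈ [0,1)². If z does not lie in the interior of the box I_{j₁,m₁} × I_{j₂,m₂}, i.e. z ∉ (b^{−j₁}m₁, b^{−j₁}(m₁+1)) × (b^{−j₂}m₂, b^{−j₂}(m₂+1)), then ∫_{[0,1)²} 1[x₁ > z₁]·1[x₂ > z₂] · h_{j₁,m₁,ℓ₁}(x₁) · h_{j₂,m₂,ℓ₂}(x₂) dx₁dx₂ = 0. -/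

import Mathlib

open Finset MeasureTheory

/-- `bexp b ℓ k = exp(2πiℓk/b)`. -/
noncomputable def bexp (b ℓ k : ℕ) : ℂ :=
  Complex.exp (2 * Real.pi * Complex.I * ℓ * k / b)

/-- The `b`-adic Haar function `h_{j,m,ℓ}` on `[0,1)`. -/
noncomputable def haar (b j m ℓ : ℕ) (x : ℝ) : ℂ :=
  ∑ k ∈ Finset.range b,
    if ((b:ℝ)^(j+1))⁻¹ * ((b:ℝ)*m + k) ≤ x ∧ x < ((b:ℝ)^(j+1))⁻¹ * ((b:ℝ)*m + k + 1)
    then bexp b ℓ k else 0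

lemma sum_bexp (b ℓ : ℕ) (hb : 2 ≤ b) (hℓ : 1 ≤ ℓ) (hℓ' : ℓ ≤ b - 1) :
    ∑ k ∈ Finset.range b, bexp b ℓ k = 0 := by
  set x : ℂ := Complex.exp (2 * Real.pi * Complex.I * ℓ / b) with hx
  have hbne : (b:ℂ) ≠ 0 := Nat.cast_ne_zero.mpr (by omega)
  have hpow : ∀ k : ℕ, bexp b ℓ k = x ^ k := by
    intro k
    rw [hx, ← Complex.exp_nat_mul, bexp]
    ring_nf
  have hx1 : x ≠ 1 := by
    intro hcon
    rw [hx, Complex.exp_eq_one_iff] at hcon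
    obtain ⟨n, hn⟩ := hcon
    have h2 : (2 * Real.pi * Complex.I : ℂ) ≠ 0 := by
      simp [Real.pi_ne_zero, Complex.I_ne_zero]
    rw [div_eq_iff hbne] at hn
    have hC : (ℓ : ℂ) = (n : ℂ) * b := by
      apply mul_left_cancel₀ h2
      linear_combination hn
    have hZ : (ℓ : ℤ) = n * b := by exact_mod_cast hC
    have hb' : (0:ℤ) < (b:ℤ) := by exact_mod_cast (by omega : 0 < b)
    have hl1 : (1:ℤ) ≤ (ℓ:ℤ) := by exact_mod_cast hℓ
    have hlb : (ℓ:ℤ) < (b:ℤ) := by exact_mod_cast (by omega : ℓ < b)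
    have hn1 : 1 ≤ n := by nlinarith
    nlinarith
  have hxb : x ^ b = 1 := by
    rw [hx, ← Complex.exp_nat_mul]
    have : (b:ℂ) * (2 * Real.pi * Complex.I * ℓ / b) = ℓ * (2 * Real.pi * Complex.I) := by
      field_simp
    rw [this, Complex.exp_nat_mul_two_pi_mul_I]
  calc ∑ k ∈ Finset.range b, bexp b ℓ k = ∑ k ∈ Finset.range b, x ^ k := by
        exact Finset.sum_congr rfl fun k _ => hpow k
    _ = (x ^ b - 1) / (x - 1) := geom_sum_eq hx1 b
    _ = 0 := by rw [hxb]; simp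

lemma haar_eq_zero_of_not_mem (b j m ℓ : ℕ) (hb : 2 ≤ b) (x : ℝ)
    (hx : x < ((b:ℝ)^j)⁻¹ * m ∨ ((b:ℝ)^j)⁻¹ * (m+1) ≤ x) :
    haar b j m ℓ x = 0 := by
  have hB : (0:ℝ) < (b:ℝ) := by exact_mod_cast (by omega : 0 < b)
  have hBp : (0:ℝ) < (b:ℝ)^(j+1) := pow_pos hB _
  apply Finset.sum_eq_zero
  intro k hk
  rw [if_neg]
  rintro ⟨h1, h2⟩
  have hkb : (k:ℝ) < b := by exact_mod_cast Finset.mem_range.mp hk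
  have key1 : ((b:ℝ)^j)⁻¹ * m ≤ ((b:ℝ)^(j+1))⁻¹ * ((b:ℝ)*m + k) := by
    rw [pow_succ, mul_inv]
    have : ((b:ℝ)^j)⁻¹ * m = ((b:ℝ)^j)⁻¹ * (b:ℝ)⁻¹ * ((b:ℝ)*m) := by
      field_simp
    rw [this]
    have hk0 : (0:ℝ) ≤ k := Nat.cast_nonneg k
    have : (0:ℝ) < ((b:ℝ)^j)⁻¹ * (b:ℝ)⁻¹ := by positivity
    nlinarith
  have key2 : ((b:ℝ)^(j+1))⁻¹ * ((b:ℝ)*m + k + 1) ≤ ((b:ℝ)^j)⁻¹ * (m+1) := by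
    rw [pow_succ, mul_inv]
    have : ((b:ℝ)^j)⁻¹ * ((m:ℝ)+1) = ((b:ℝ)^j)⁻¹ * (b:ℝ)⁻¹ * ((b:ℝ)*(m+1)) := by
      field_simp
    rw [this]
    have hkb' : (k:ℝ) + 1 ≤ b := by
      have : k + 1 ≤ b := Finset.mem_range.mp hk
      exact_mod_cast this
    have h0 : (0:ℝ) < ((b:ℝ)^j)⁻¹ * (b:ℝ)⁻¹ := by positivity
    nlinarith
  rcases hx with h | h
  · exact absurd (le_trans key1 h1) (not_le.mpr h)
  · exact absurd (lt_of_lt_of_le h2 key2) (not_lt.mpr h)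

lemma integral_ite_Ico (a a' : ℝ) (c : ℂ) (h0 : 0 ≤ a) (h : a ≤ a') (h1 : a' ≤ 1) :
    ∫ x in Set.Ico (0:ℝ) 1, (if a ≤ x ∧ x < a' then c else 0) = (a' - a) • c := by
  have heq : (fun x : ℝ => if a ≤ x ∧ x < a' then c else 0)
      = Set.indicator (Set.Ico a a') (fun _ => c) := by
    funext x
    simp [Set.indicator_apply, Set.mem_Ico]
  rw [heq, setIntegral_indicator measurableSet_Ico]
  have : Set.Ico (0:ℝ) 1 ∩ Set.Ico a a' = Set.Ico a a' := by
    apply Set.inter_eq_self_of_subset_right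
    intro x hx
    exact ⟨le_trans h0 hx.1, lt_of_lt_of_le hx.2 h1⟩
  rw [this, setIntegral_const]
  rw [Real.volume_real_Ico_of_le h]

lemma integral_haar (b j m ℓ : ℕ) (hb : 2 ≤ b) (hm : m < b^j) (hℓ : 1 ≤ ℓ) (hℓ' : ℓ ≤ b - 1) :
    ∫ x in Set.Ico (0:ℝ) 1, haar b j m ℓ x = 0 := by
  have hB : (0:ℝ) < (b:ℝ) := by exact_mod_cast (by omega : 0 < b)
  have hBp : (0:ℝ) < (b:ℝ)^(j+1) := pow_pos hB _
  have hBj : (0:ℝ) < (b:ℝ)^j := pow_pos hB _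
  have hmr : (m:ℝ) + 1 ≤ (b:ℝ)^j := by exact_mod_cast (by omega : m + 1 ≤ b^j)
  have hint : ∀ k ∈ Finset.range b, IntegrableOn
      (fun x : ℝ => if ((b:ℝ)^(j+1))⁻¹ * ((b:ℝ)*m + k) ≤ x ∧ x < ((b:ℝ)^(j+1))⁻¹ * ((b:ℝ)*m + k + 1)
        then bexp b ℓ k else 0) (Set.Ico (0:ℝ) 1) := by
    intro k _
    have h1 : Integrable ((Set.Ico (((b:ℝ)^(j+1))⁻¹ * ((b:ℝ)*m + k))
        (((b:ℝ)^(j+1))⁻¹ * ((b:ℝ)*m + k + 1))).indicator (fun _ : ℝ => bexp b ℓ k)) volume :=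
      ((integrableOn_const measure_Ico_lt_top.ne).integrable_indicator measurableSet_Ico)
    refine (h1.congr ?_).integrableOn
    filter_upwards with x
    simp [Set.indicator_apply, Set.mem_Ico]
  unfold haar
  rw [integral_finset_sum _ hint]
  have hterm : ∀ k ∈ Finset.range b,
      (∫ x in Set.Ico (0:ℝ) 1,
        if ((b:ℝ)^(j+1))⁻¹ * ((b:ℝ)*m + k) ≤ x ∧ x < ((b:ℝ)^(j+1))⁻¹ * ((b:ℝ)*m + k + 1)
        then bexp b ℓ k else 0) = (((b:ℝ)^(j+1))⁻¹ : ℝ) • bexp b ℓ k := by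
    intro k hk
    have hkb : (k:ℝ) + 1 ≤ b := by exact_mod_cast Finset.mem_range.mp hk
    have hk0 : (0:ℝ) ≤ k := Nat.cast_nonneg k
    have hm0 : (0:ℝ) ≤ m := Nat.cast_nonneg m
    rw [integral_ite_Ico]
    · congr 1
      ring
    · positivity
    · have : (0:ℝ) < ((b:ℝ)^(j+1))⁻¹ := by positivity
      nlinarith
    · have hBinv : (0:ℝ) < ((b:ℝ)^(j+1))⁻¹ := by positivity
      have : ((b:ℝ)^(j+1))⁻¹ * ((b:ℝ)*m + k + 1) ≤ ((b:ℝ)^(j+1))⁻¹ * ((b:ℝ)*((m:ℝ)+1)) := by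
        apply mul_le_mul_of_nonneg_left _ (le_of_lt hBinv)
        nlinarith
      apply le_trans this
      rw [pow_succ, mul_inv]
      have heq : ((b:ℝ)^j)⁻¹ * (b:ℝ)⁻¹ * ((b:ℝ)*((m:ℝ)+1)) = ((b:ℝ)^j)⁻¹ * ((m:ℝ)+1) := by
        field_simp
      rw [heq]
      calc ((b:ℝ)^j)⁻¹ * ((m:ℝ)+1) ≤ ((b:ℝ)^j)⁻¹ * ((b:ℝ)^j) :=
            mul_le_mul_of_nonneg_left hmr (by positivity)
        _ = 1 := inv_mul_cancel₀ (ne_of_gt hBj)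
  rw [Finset.sum_congr rfl hterm, ← Finset.smul_sum, sum_bexp b ℓ hb hℓ hℓ', smul_zero]

lemma one_dim (b j m ℓ : ℕ) (hb : 2 ≤ b) (hm : m < b^j) (hℓ : 1 ≤ ℓ) (hℓ' : ℓ ≤ b - 1)
    (z : ℝ) (hz : z ∈ Set.Ico (0:ℝ) 1)
    (hzo : z ∉ Set.Ioo ((b:ℝ)^(-(j:ℤ)) * m) ((b:ℝ)^(-(j:ℤ)) * (m + 1))) :
    ∫ x in Set.Ico (0:ℝ) 1, (if z < x then (1:ℂ) else 0) * haar b j m ℓ x = 0 := by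
  have hzp : ((b:ℝ)^(-(j:ℤ)) : ℝ) = ((b:ℝ)^j)⁻¹ := by
    rw [zpow_neg, zpow_natCast]
  rw [hzp] at hzo
  rw [Set.mem_Ioo, not_and_or, not_lt, not_lt] at hzo
  rcases hzo with h | h
  · -- z ≤ L : the indicator is a.e. 1 on the support
    have hae : (fun x : ℝ => (if z < x then (1:ℂ) else 0) * haar b j m ℓ x)
        =ᵐ[volume.restrict (Set.Ico (0:ℝ) 1)] haar b j m ℓ := by
      have hane : ∀ᵐ x : ℝ, x ≠ z := by
        rw [ae_iff]
        have : {x : ℝ | ¬ x ≠ z} = {z} := by ext x; simp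
        rw [this, Real.volume_singleton]
      filter_upwards [ae_restrict_of_ae hane] with x hx
      by_cases hlt : z < x
      · simp [hlt]
      · have hxz : x < z := lt_of_le_of_ne (not_lt.mp hlt) hx
        rw [if_neg hlt, zero_mul,
          haar_eq_zero_of_not_mem b j m ℓ hb x (Or.inl (lt_of_lt_of_le hxz h))]
    rw [integral_congr_ae hae, integral_haar b j m ℓ hb hm hℓ hℓ']
  · -- R ≤ z : the integrand vanishes pointwise
    have hzero : ∀ x : ℝ, (if z < x then (1:ℂ) else 0) * haar b j m ℓ x = 0 := by
      intro x
      by_cases hlt : z < x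
      · rw [haar_eq_zero_of_not_mem b j m ℓ hb x (Or.inr (le_trans h hlt.le)), mul_zero]
      · rw [if_neg hlt, zero_mul]
    simp only [hzero, integral_zero]

/-- If `z = (z₁,z₂) ∈ [0,1)²` does not lie in the interior of the `b`-adic box
`I_{j₁,m₁} × I_{j₂,m₂}`, the Haar coefficient of the indicator of `(z₁,1) × (z₂,1)`
vanishes. -/
theorem haar_coeff_indicator_eq_zero (b : ℕ) (hb : 2 ≤ b) (j₁ j₂ m₁ m₂ ℓ₁ ℓ₂ : ℕ)
    (hm₁ : m₁ < b ^ j₁) (hm₂ : m₂ < b ^ j₂)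
    (hℓ₁ : 1 ≤ ℓ₁) (hℓ₁' : ℓ₁ ≤ b - 1) (hℓ₂ : 1 ≤ ℓ₂) (hℓ₂' : ℓ₂ ≤ b - 1)
    (z₁ z₂ : ℝ) (hz₁ : z₁ ∈ Set.Ico (0:ℝ) 1) (hz₂ : z₂ ∈ Set.Ico (0:ℝ) 1)
    (hz : ¬ (z₁ ∈ Set.Ioo ((b:ℝ)^(-(j₁:ℤ)) * m₁) ((b:ℝ)^(-(j₁:ℤ)) * (m₁ + 1)) ∧
             z₂ ∈ Set.Ioo ((b:ℝ)^(-(j₂:ℤ)) * m₂) ((b:ℝ)^(-(j₂:ℤ)) * (m₂ + 1)))) :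
    (∫ x₁ in Set.Ico (0:ℝ) 1, ∫ x₂ in Set.Ico (0:ℝ) 1,
        (if z₁ < x₁ then (1:ℂ) else 0) * (if z₂ < x₂ then (1:ℂ) else 0) *
          haar b j₁ m₁ ℓ₁ x₁ * haar b j₂ m₂ ℓ₂ x₂) = 0 := by
  have hre : ∀ x₁ x₂ : ℝ,
      (if z₁ < x₁ then (1:ℂ) else 0) * (if z₂ < x₂ then (1:ℂ) else 0) *
        haar b j₁ m₁ ℓ₁ x₁ * haar b j₂ m₂ ℓ₂ x₂
      = ((if z₁ < x₁ then (1:ℂ) else 0) * haar b j₁ m₁ ℓ₁ x₁) *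
        ((if z₂ < x₂ then (1:ℂ) else 0) * haar b j₂ m₂ ℓ₂ x₂) := by
    intro x₁ x₂; ring
  simp only [hre]
  have hfac : ∀ x₁ : ℝ,
      (∫ x₂ in Set.Ico (0:ℝ) 1,
        ((if z₁ < x₁ then (1:ℂ) else 0) * haar b j₁ m₁ ℓ₁ x₁) *
          ((if z₂ < x₂ then (1:ℂ) else 0) * haar b j₂ m₂ ℓ₂ x₂))
      = ((if z₁ < x₁ then (1:ℂ) else 0) * haar b j₁ m₁ ℓ₁ x₁) *
        (∫ x₂ in Set.Ico (0:ℝ) 1, (if z₂ < x₂ then (1:ℂ) else 0) * haar b j₂ m₂ ℓ₂ x₂) := by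
    intro x₁
    exact MeasureTheory.integral_const_mul _ _
  simp only [hfac]
  rw [MeasureTheory.integral_mul_const]
  rw [not_and_or] at hz
  rcases hz with h | h
  · rw [one_dim b j₁ m₁ ℓ₁ hb hm₁ hℓ₁ hℓ₁' z₁ hz₁ h, zero_mul]
  · rw [one_dim b j₂ m₂ ℓ₂ hb hm₂ hℓ₂ hℓ₂' z₂ hz₂ h, mul_zero]
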